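/- The folding dynamical system (X, G) is indecomposable: there do not exist subsets A, B of X = 𝔠_N × ⟦−N,N⟧^ℕ, both closed for the metric d, both nonempty, both different from X, with A ∪ B = X, G(A) ⊆ A, and G(B) ⊆ B. -/

import Mathlib

open scoped BigOperators

namespace HP

/-- A conformation of `N+1` residues in absolute encoding
(the initial residue, always `0`, is omitted): `C k` is the paper's `C_{k+1}`. -/
abbrev Conf (N : ℕ) := Fin N → ZMod 4

open Classical in
/-- `δ(a,b) = 0` if `a = b`, `1` otherwise. -/
noncomputable def delta {α : Type*} (a b : α) : ℝ := if a = b then 0 else 1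

/-- `d_C(C,Č) = Σ_{k=1}^N δ(C_k,Č_k)·2^{N−k}`. -/
noncomputable def dC (N : ℕ) (C C' : Conf N) : ℝ :=
  ∑ k : Fin N, delta (C k) (C' k) * (2 : ℝ) ^ (N - 1 - (k : ℕ))

/-- `d_F(F,F̌) = (9/(2N))·Σ_{k=0}^∞ |F^k − F̌^k|/10^{k+1}`. -/
noncomputable def dF (N : ℕ) (F F' : ℕ → ℤ) : ℝ :=
  (9 / (2 * (N : ℝ))) * ∑' k : ℕ, |((F k : ℝ)) - ((F' k : ℝ))| / 10 ^ (k + 1)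

/-- `d((C,F),(Č,F̌)) = d_C(C,Č) + d_F(F,F̌)`. -/
noncomputable def distX (N : ℕ) (X Y : Conf N × (ℕ → ℤ)) : ℝ :=
  dC N X.1 Y.1 + dF N X.2 Y.2

/-- A folding sequence takes values in `⟦−N,N⟧`. -/
def validSeq (N : ℕ) (F : ℕ → ℤ) : Prop := ∀ k, |F k| ≤ (N : ℤ)

/-- The fold map `f_k`: residues with (paper) index `≥ |k|` are rotated by
`f^{sign k}` where `f x = x + 1` (in `ℤ/4ℤ`); `f_0 = id`. -/
def foldMap (N : ℕ) (k : ℤ) (C : Conf N) : Conf N :=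
  fun j => if ((j : ℕ) : ℤ) + 1 < |k| then C j else C j + (Int.sign k : ZMod 4)

/-- The folding dynamics `G(C,F) = (f_{i(F)}(C), σ(F))`. -/
def G (N : ℕ) : Conf N × (ℕ → ℤ) → Conf N × (ℕ → ℤ) :=
  fun X => (foldMap N (X.2 0) X.1, fun n => X.2 (n + 1))

/-- The shift `σ` on folding sequences. -/
def shiftF (F : ℕ → ℤ) : ℕ → ℤ := fun k => F (k + 1)

/-- Unit move in the 2D lattice associated with an absolute encoding letter. -/
def step (c : ZMod 4) : ℤ × ℤ :=
  if c = 0 then (1, 0) else if c = 1 then (0, -1) else if c = 2 then (-1, 0) else (0, 1)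

/-- `pos N C i` is the lattice point `X_i` of the 2D representation `p(C)`. -/
def pos (N : ℕ) (C : Conf N) : ℕ → ℤ × ℤ
  | 0 => (0, 0)
  | i + 1 => pos N C i + (if h : i < N then step (C ⟨i, h⟩) else 0)

/-- The SAW requirement: the lattice points `X_0, …, X_N` are pairwise distinct. -/
def SAW (N : ℕ) (C : Conf N) : Prop :=
  ∀ i j : ℕ, i ≤ N → j ≤ N → pos N C i = pos N C j → i = j

/-- Successive application of fold maps `f_{k_1}, …, f_{k_n}`. -/
def folds (N : ℕ) : Conf N → List ℤ → Conf N
  | C, [] => C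
  | C, k :: t => folds N (foldMap N k C) t

/-- The set `𝔠_N` of acceptable conformations: obtained from `(0,…,0)` by a
nonempty sequence of folds in `⟦−N,N⟧`, all intermediate conformations
(including the initial and final ones) satisfying the SAW requirement. -/
def acceptable (N : ℕ) (C : Conf N) : Prop :=
  ∃ L : List ℤ, L ≠ [] ∧ (∀ k ∈ L, |k| ≤ (N : ℤ)) ∧
    folds N (fun _ => 0) L = C ∧
    ∀ p : List ℤ, p <+: L → SAW N (folds N (fun _ => 0) p)

/-- Membership in the phase space `X = 𝔠_N × ⟦−N,N⟧^ℕ`. -/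
def inX (N : ℕ) (X : Conf N × (ℕ → ℤ)) : Prop :=
  acceptable N X.1 ∧ validSeq N X.2

/-- `U` is open in the metric space `(X, d)` (relative topology on `𝔠_N × ⟦−N,N⟧^ℕ`). -/
def openIn (N : ℕ) (U : Set (Conf N × (ℕ → ℤ))) : Prop :=
  ∀ x ∈ U, ∃ ε > (0 : ℝ), ∀ y, inX N y → distX N x y < ε → y ∈ U

/-- `A` is closed in the metric space `(X, d)` (relative topology). -/
def closedIn (N : ℕ) (A : Set (Conf N × (ℕ → ℤ))) : Prop :=
  ∀ x, inX N x → x ∉ A → ∃ ε > (0 : ℝ), ∀ y, inX N y → distX N x y < ε → y ∉ A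

/-! ### Auxiliary machinery for the proof -/

def inv' (l : List ℤ) : List ℤ := l.reverse.map Neg.neg

lemma foldMap_zero' (N : ℕ) (C : Conf N) : foldMap N 0 C = C := by
  funext j; simp [foldMap]

lemma foldMap_neg (N : ℕ) (k : ℤ) (C : Conf N) :
    foldMap N (-k) (foldMap N k C) = C := by
  funext j
  simp only [foldMap, abs_neg]
  by_cases h : ((j : ℕ) : ℤ) + 1 < |k|
  · simp [h]
  · simp only [h, if_false]
    rw [Int.sign_neg, Int.cast_neg]
    ring

lemma folds_append (N : ℕ) (C : Conf N) (l l' : List ℤ) :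
    folds N C (l ++ l') = folds N (folds N C l) l' := by
  induction l generalizing C with
  | nil => rfl
  | cons a t ih => simp [folds, ih]

lemma folds_inv (N : ℕ) (C : Conf N) (l : List ℤ) :
    folds N (folds N C l) (inv' l) = C := by
  induction l generalizing C with
  | nil => rfl
  | cons a t ih =>
    have h : inv' (a :: t) = inv' t ++ [-a] := by simp [inv']
    show folds N (folds N (foldMap N a C) t) (inv' (a :: t)) = C
    rw [h, folds_append, ih]
    show foldMap N (-a) (foldMap N a C) = C
    exact foldMap_neg N a C

def clampI (N : ℕ) (k : ℤ) : ℤ := if |k| ≤ (N : ℤ) then k else 0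

lemma abs_clampI (N : ℕ) (k : ℤ) : |clampI N k| ≤ (N : ℤ) := by
  unfold clampI; split
  · assumption
  · simp

/-- The `n`-th pair of lists in a fixed enumeration, entries clamped to `⟦-N,N⟧`. -/
noncomputable def word (N n : ℕ) : List ℤ :=
  ((Denumerable.ofNat (List ℤ × List ℤ) n).1 ++
   (Denumerable.ofNat (List ℤ × List ℤ) n).2).map (clampI N)

/-- A block of folding instructions that traverses `word N n` and undoes itself. -/
noncomputable def block (N n : ℕ) : List ℤ := word N n ++ inv' (word N n) ++ [0]

/-- Concatenation of the first `n` blocks. -/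
noncomputable def P (N : ℕ) : ℕ → List ℤ
  | 0 => []
  | n + 1 => P N n ++ block N n

lemma folds_block (N : ℕ) (C : Conf N) (n : ℕ) : folds N C (block N n) = C := by
  unfold block
  rw [folds_append, folds_append, folds_inv]
  show foldMap N 0 C = C
  exact foldMap_zero' N C

lemma folds_P (N : ℕ) (C : Conf N) (n : ℕ) : folds N C (P N n) = C := by
  induction n with
  | zero => rfl
  | succ n ih => rw [P, folds_append, ih, folds_block]

lemma length_P (N n : ℕ) : n ≤ (P N n).length := by
  induction n with
  | zero => simp [P]
  | succ n ih => simp [P, block]; omega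

lemma mem_block (N n : ℕ) {x : ℤ} (hx : x ∈ block N n) : |x| ≤ (N : ℤ) := by
  have hw : ∀ y ∈ word N n, |y| ≤ (N : ℤ) := by
    intro y hy
    obtain ⟨z, _, rfl⟩ := List.mem_map.1 hy
    exact abs_clampI N z
  simp only [block, List.mem_append, List.mem_singleton] at hx
  rcases hx with (h | h) | h
  · exact hw _ h
  · rw [inv'] at h
    obtain ⟨z, hz, rfl⟩ := List.mem_map.1 h
    rw [abs_neg]; exact hw _ (List.mem_reverse.1 hz)
  · simp [h]

lemma mem_P (N n : ℕ) {x : ℤ} (hx : x ∈ P N n) : |x| ≤ (N : ℤ) := by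
  induction n with
  | zero => simp [P] at hx
  | succ n ih =>
    simp only [P, List.mem_append] at hx
    rcases hx with h | h
    · exact ih h
    · exact mem_block N n h

lemma P_prefix (N : ℕ) {a b : ℕ} (h : a ≤ b) : P N a <+: P N b := by
  induction b with
  | zero => simp_all
  | succ b ih =>
    rcases Nat.eq_or_lt_of_le h with rfl | h'
    · exact List.prefix_refl _
    · exact (ih (Nat.lt_succ_iff.1 h')).trans ⟨block N b, rfl⟩

/-- The universal folding sequence: the concatenation of all blocks. -/
noncomputable def Fstar (N : ℕ) (k : ℕ) : ℤ := (P N (k + 1)).getD k 0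

lemma getD_of_prefix {l l' : List ℤ} (h : l <+: l') {k : ℕ} (hk : k < l.length) :
    l'.getD k 0 = l.getD k 0 := by
  obtain ⟨s, rfl⟩ := h
  rw [List.getD_append _ _ _ _ hk]

lemma Fstar_eq (N M k : ℕ) (hk : k < (P N M).length) :
    Fstar N k = (P N M).getD k 0 := by
  have hk' : k < (P N (k + 1)).length := lt_of_lt_of_le (Nat.lt_succ_self k) (length_P N (k + 1))
  rcases le_total (k + 1) M with h | h
  · exact (getD_of_prefix (P_prefix N h) hk').symm
  · exact (getD_of_prefix (P_prefix N h) hk)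

lemma valid_Fstar (N : ℕ) : validSeq N (Fstar N) := by
  intro k
  unfold Fstar
  rcases lt_or_ge k (P N (k + 1)).length with h | h
  · rw [List.getD_eq_getElem _ 0 h]
    exact mem_P N (k + 1) (List.getElem_mem _)
  · rw [List.getD_eq_default _ 0 h]; simp

lemma iterate_G (N : ℕ) (t : ℕ) (C : Conf N) (F : ℕ → ℤ) :
    (G N)^[t] (C, F) = (folds N C ((List.range t).map F), fun n => F (n + t)) := by
  induction t generalizing C F with
  | zero => simp [folds]
  | succ t ih =>
    rw [Function.iterate_succ_apply]
    show (G N)^[t] (foldMap N (F 0) C, fun n => F (n + 1)) = _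
    rw [ih]
    have h1 : (List.range (t + 1)).map F = F 0 :: (List.range t).map (fun n => F (n + 1)) := by
      rw [List.range_succ_eq_map]
      simp [Function.comp, Nat.succ_eq_add_one]
    rw [h1]
    refine Prod.ext rfl ?_
    funext n
    exact congrArg F (by omega)

lemma dF_le (N : ℕ) (hN : 1 ≤ N) (F1 F2 : ℕ → ℤ)
    (h1 : validSeq N F1) (h2 : validSeq N F2) (m : ℕ)
    (hag : ∀ k < m, F1 k = F2 k) : dF N F1 F2 ≤ (1 / 10) ^ m := by
  have hNR : (0 : ℝ) < N := by exact_mod_cast hN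
  set a : ℕ → ℝ := fun k => |((F1 k : ℝ)) - (F2 k : ℝ)| / 10 ^ (k + 1) with ha
  have hnum : ∀ k, |((F1 k : ℝ)) - (F2 k : ℝ)| ≤ 2 * N := by
    intro k
    have b1 : |((F1 k : ℝ))| ≤ (N : ℝ) := by exact_mod_cast abs_le.2 (abs_le.1 (h1 k))
    have b2 : |((F2 k : ℝ))| ≤ (N : ℝ) := by exact_mod_cast abs_le.2 (abs_le.1 (h2 k))
    calc |((F1 k : ℝ)) - (F2 k : ℝ)| ≤ |((F1 k : ℝ))| + |((F2 k : ℝ))| := abs_sub _ _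
      _ ≤ 2 * N := by linarith
  have hbound : ∀ k, a k ≤ (2 * N) * (1 / 10) ^ (k + 1) := by
    intro k
    have : a k = |((F1 k : ℝ)) - (F2 k : ℝ)| * (1 / 10) ^ (k + 1) := by
      rw [ha]; simp [div_eq_mul_inv, one_div, inv_pow]
    rw [this]
    exact mul_le_mul_of_nonneg_right (hnum k) (by positivity)
  have hanneg : ∀ k, 0 ≤ a k := fun k => by positivity
  have hgs : Summable (fun k : ℕ => ((1 : ℝ) / 10) ^ k) :=
    summable_geometric_of_lt_one (by norm_num) (by norm_num)
  have hbs : Summable (fun k : ℕ => (2 * (N : ℝ)) * (1 / 10) ^ (k + 1)) := by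
    have := (hgs.mul_left (2 * (N : ℝ) * (1 / 10)))
    refine this.congr (fun k => ?_)
    rw [pow_succ]
    ring
  have hs : Summable a := Summable.of_nonneg_of_le hanneg hbound hbs
  have hsplit := Summable.sum_add_tsum_nat_add m hs
  have hzero : ∑ i ∈ Finset.range m, a i = 0 := by
    apply Finset.sum_eq_zero
    intro i hi
    have := hag i (Finset.mem_range.1 hi)
    simp [ha, this]
  have htail : ∑' k, a (k + m) ≤ (2 * N) * (1 / 10) ^ (m + 1) * (10 / 9) := by
    have hb2 : ∀ k, a (k + m) ≤ ((2 * N) * (1 / 10) ^ (m + 1)) * (1 / 10) ^ k := by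
      intro k
      calc a (k + m) ≤ (2 * N) * (1 / 10) ^ (k + m + 1) := hbound (k + m)
        _ = ((2 * N) * (1 / 10) ^ (m + 1)) * (1 / 10) ^ k := by
            rw [show k + m + 1 = (m + 1) + k by omega, pow_add]; ring
    calc ∑' k, a (k + m) ≤ ∑' k, ((2 * (N : ℝ)) * (1 / 10) ^ (m + 1)) * (1 / 10) ^ k := by
          apply Summable.tsum_le_tsum hb2 ((summable_nat_add_iff m).2 hs) (hgs.mul_left _)
      _ = ((2 * (N : ℝ)) * (1 / 10) ^ (m + 1)) * ((1 - 1 / 10)⁻¹) := by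
          rw [tsum_mul_left, tsum_geometric_of_lt_one (by norm_num) (by norm_num)]
      _ = (2 * (N : ℝ)) * (1 / 10) ^ (m + 1) * (10 / 9) := by norm_num
  have htsum : ∑' k, a k ≤ (2 * N) * (1 / 10) ^ (m + 1) * (10 / 9) := by
    rw [← hsplit, hzero, zero_add]; exact htail
  have : dF N F1 F2 ≤ (9 / (2 * (N : ℝ))) * ((2 * N) * (1 / 10) ^ (m + 1) * (10 / 9)) := by
    rw [dF]
    exact mul_le_mul_of_nonneg_left htsum (by positivity)
  refine this.trans (le_of_eq ?_)
  rw [pow_succ]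
  field_simp

lemma dC_self (N : ℕ) (C : Conf N) : dC N C C = 0 := by
  simp [dC, delta]

lemma pos_zero (N : ℕ) : ∀ i, i ≤ N → pos N (fun _ => 0) i = ((i : ℤ), 0)
  | 0, _ => rfl
  | i + 1, hi => by
    have hi' : i < N := Nat.lt_of_succ_le hi
    rw [pos, pos_zero N i (le_of_lt hi'), dif_pos hi']
    show ((i : ℤ), (0 : ℤ)) + step 0 = _
    simp only [step, if_pos rfl, Prod.mk_add_mk]
    push_cast
    norm_num

lemma zero_SAW (N : ℕ) : SAW N (fun _ => 0) := by
  intro i j hi hj h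
  rw [pos_zero N i hi, pos_zero N j hj] at h
  obtain ⟨h1, -⟩ := Prod.mk.inj h
  exact_mod_cast h1

lemma zero_acceptable (N : ℕ) : acceptable N (fun _ => 0) := by
  refine ⟨[0], by simp, by simp, foldMap_zero' N _, ?_⟩
  intro p hp
  have hp' : folds N (fun _ => 0) p = (fun _ => 0) := by
    obtain ⟨s, hs⟩ := hp
    cases p with
    | nil => rfl
    | cons a t =>
      have : a = 0 ∧ t ++ s = [] := by simpa using hs
      obtain ⟨rfl, h2⟩ := this
      have ht : t = [] := by
        rcases List.append_eq_nil_iff.1 h2 with ⟨h, -⟩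
        exact h
      subst ht
      exact foldMap_zero' N _
  rw [hp']
  exact zero_SAW N


/-- the folding dynamical system `(X, G)` is indecomposable:
`X` is not the union of two nonempty proper closed `G`-invariant subsets. -/
theorem G_indecomposable (N : ℕ) (hN : 1 ≤ N) :
    ¬ ∃ A B : Set (Conf N × (ℕ → ℤ)),
        A ⊆ {x | inX N x} ∧ B ⊆ {x | inX N x} ∧
        closedIn N A ∧ closedIn N B ∧
        A.Nonempty ∧ B.Nonempty ∧
        A ≠ {x | inX N x} ∧ B ≠ {x | inX N x} ∧
        A ∪ B = {x | inX N x} ∧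
        (∀ x ∈ A, G N x ∈ A) ∧ (∀ x ∈ B, G N x ∈ B) := by
  rintro ⟨A, B, hAX, hBX, hAc, hBc, -, -, hAne, hBne, hUnion, hAinv, hBinv⟩
  set x0 : Conf N × (ℕ → ℤ) := (fun _ => 0, Fstar N) with hx0def
  have hx0X : inX N x0 := ⟨zero_acceptable N, valid_Fstar N⟩
  -- density of the orbit of x0 in X
  have hdense : ∀ y, inX N y → ∀ ε > (0 : ℝ),
      ∃ t, inX N ((G N)^[t] x0) ∧ distX N y ((G N)^[t] x0) < ε := by
    rintro ⟨C, F'⟩ ⟨hCacc, hF'⟩ ε hε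
    obtain ⟨L, hLne, hLb, hLfold, -⟩ := id hCacc
    obtain ⟨m, hm⟩ := exists_pow_lt_of_lt_one hε (show (1 : ℝ) / 10 < 1 by norm_num)
    set w : List ℤ := (List.range m).map F' with hw
    set n : ℕ := Encodable.encode (L, w) with hn
    have hofn : Denumerable.ofNat (List ℤ × List ℤ) n = (L, w) := Denumerable.ofNat_encode _
    have hword : word N n = L ++ w := by
      rw [word, hofn]
      have hcl : ∀ z ∈ L ++ w, clampI N z = z := by
        intro z hz
        rcases List.mem_append.1 hz with h | h
        · exact if_pos (hLb z h)
        · obtain ⟨i, -, rfl⟩ := List.mem_map.1 h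
          exact if_pos (hF' i)
      calc (L ++ w).map (clampI N) = (L ++ w).map id := List.map_congr_left hcl
        _ = L ++ w := List.map_id _
    set t := (P N n).length + L.length with ht
    have hblock : block N n = L ++ (w ++ (inv' (word N n) ++ [0])) := by
      rw [block, hword]; simp [List.append_assoc]
    have hPn1 : P N (n + 1) = (P N n ++ L) ++ (w ++ (inv' (word N n) ++ [0])) := by
      rw [P, hblock]; simp [List.append_assoc]
    have hwlen : w.length = m := by rw [hw]; simp
    have hlen : t + m ≤ (P N (n + 1)).length := by
      rw [hPn1]
      simp only [List.length_append, hwlen, ht]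
      omega
    have hprefix : (List.range t).map (Fstar N) = P N n ++ L := by
      apply List.ext_getElem
      · simp [ht]
      · intro i h1 h2
        simp only [List.getElem_map, List.getElem_range]
        have hi : i < t := by simpa using h1
        have hIlt : i < (P N (n + 1)).length := lt_of_lt_of_le (by omega) hlen
        rw [Fstar_eq N (n + 1) i hIlt, hPn1]
        have h2' : i < (P N n ++ L).length := h2
        rw [List.getD_append _ _ _ _ h2', List.getD_eq_getElem _ 0 h2']
    have hconf : folds N (fun _ => 0) ((List.range t).map (Fstar N)) = C := by
      rw [hprefix, folds_append, folds_P, hLfold]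
    have hFt : ∀ k, k < m → F' k = Fstar N (k + t) := by
      intro k hk
      have hklt : k + t < (P N (n + 1)).length := lt_of_lt_of_le (by omega) hlen
      rw [Fstar_eq N (n + 1) _ hklt, hPn1]
      have hlen2 : (P N n ++ L).length ≤ k + t := by
        simp only [List.length_append, ht]; omega
      rw [List.getD_append_right _ _ _ _ hlen2]
      have hsub : k + t - (P N n ++ L).length = k := by
        simp only [List.length_append, ht]; omega
      rw [hsub]
      have hkw : k < w.length := by omega
      rw [List.getD_append _ _ _ _ hkw, List.getD_eq_getElem _ 0 hkw]
      simp [hw]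
    have hit := iterate_G N t (fun _ => 0) (Fstar N)
    refine ⟨t, ?_, ?_⟩
    · rw [hx0def, hit, hconf]
      exact ⟨hCacc, fun k => valid_Fstar N (k + t)⟩
    · rw [hx0def, hit, hconf]
      have hdFle : dF N F' (fun n_1 => Fstar N (n_1 + t)) ≤ (1 / 10) ^ m :=
        dF_le N hN F' _ hF' (fun k => valid_Fstar N (k + t)) m hFt
      have : distX N (C, F') (C, fun n_1 => Fstar N (n_1 + t)) =
          dF N F' (fun n_1 => Fstar N (n_1 + t)) := by
        rw [distX]
        simp only
        rw [dC_self]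
        ring
      rw [this]
      exact lt_of_le_of_lt hdFle hm
  -- a proper closed invariant subset of X cannot contain x0
  have main : ∀ S : Set (Conf N × (ℕ → ℤ)), closedIn N S → (∀ z ∈ S, G N z ∈ S) →
      S ≠ {x | inX N x} → S ⊆ {x | inX N x} → x0 ∈ S → False := by
    intro S hSc hSinv hSne hSsub hx0S
    have horb : ∀ t, (G N)^[t] x0 ∈ S := by
      intro t
      induction t with
      | zero => exact hx0S
      | succ t ih =>
        rw [Function.iterate_succ_apply']
        exact hSinv _ ih
    have hex : ∃ y, inX N y ∧ y ∉ S := by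
      by_contra h
      push_neg at h
      exact hSne (Set.Subset.antisymm hSsub (fun y hy => h y hy))
    obtain ⟨y, hyX, hyS⟩ := hex
    obtain ⟨ε, hε, hball⟩ := hSc y hyX hyS
    obtain ⟨t, hzX, hzd⟩ := hdense y hyX ε hε
    exact hball _ hzX hzd (horb t)
  have hxAB : x0 ∈ A ∪ B := by rw [hUnion]; exact hx0X
  rcases hxAB with h | h
  · exact main A hAc hAinv hAne hAX h
  · exact main B hBc hBinv hBne hBX h


end HP
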